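/- Let G' = (V',E') be a finite simple graph, r a positive integer, G = G(G',r) the gadget graph, X = A₁ ∪ A₂ ∪ B, and γ_r = (r²+r−1)/(2r²+2r−1). Then X is a γ_r-quasi-clique in G: the induced subgraph G[X] is connected and every vertex of X has degree at least ⌈γ_r·(|X|−1)⌉ = ⌈γ_r·(2r²+r−1)⌉ in G[X]. -/

import Mathlib

open SimpleGraph Set

/-- Vertex type of the gadget graph: the original vertices `V`, plus
`A₁` and `A₂` (each of size `r²`) and `B` (of size `r`). -/
abbrev GadgetV (V : Type*) (r : ℕ) : Type _ := V ⊕ (Fin (r ^ 2) ⊕ Fin (r ^ 2) ⊕ Fin r)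

/-- Membership in `A₁`. -/
def isA1 {V : Type*} {r : ℕ} : GadgetV V r → Prop
  | Sum.inr (Sum.inl _) => True
  | _ => False

/-- Membership in `A₂`. -/
def isA2 {V : Type*} {r : ℕ} : GadgetV V r → Prop
  | Sum.inr (Sum.inr (Sum.inl _)) => True
  | _ => False

/-- Membership in `B`. -/
def isB {V : Type*} {r : ℕ} : GadgetV V r → Prop
  | Sum.inr (Sum.inr (Sum.inr _)) => True
  | _ => False

/-- The gadget graph `G(G',r)`: all edges of `G'`, `A₁`, `A₂`, `B` are cliques,
all pairs between `A₁` and `A₂`, between `A₁` and `B`, and between `A₁` and `V'`.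
(A vertex of `A₁` is adjacent to every other vertex.) -/
def gadget {V : Type*} (G' : SimpleGraph V) (r : ℕ) : SimpleGraph (GadgetV V r) :=
  SimpleGraph.fromRel fun a b =>
    isA1 a ∨ (∃ u v, a = Sum.inl u ∧ b = Sum.inl v ∧ G'.Adj u v) ∨
      (isA2 a ∧ isA2 b) ∨ (isB a ∧ isB b)

/-- The set `X = A₁ ∪ A₂ ∪ B`. -/
def Xset (V : Type*) (r : ℕ) : Set (GadgetV V r) := {x | isA1 x ∨ isA2 x ∨ isB x}

/-- Degree of a vertex `v` in the subgraph of `G` induced on `Q`: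
the number of neighbors of `v` lying in `Q`. -/
noncomputable def degIn {W : Type*} (G : SimpleGraph W) (Q : Set W) (v : W) : ℕ :=
  (Q ∩ G.neighborSet v).ncard

/-- `Q` is a `γ`-quasi-clique in `G`: the induced subgraph `G[Q]` is connected and
every vertex of `Q` has degree at least `⌈γ·(|Q|-1)⌉` in `G[Q]`. -/
def IsQuasiClique {W : Type*} (G : SimpleGraph W) (γ : ℚ) (Q : Set W) : Prop :=
  (G.induce Q).Connected ∧ ∀ v ∈ Q, ⌈γ * ((Q.ncard : ℚ) - 1)⌉ ≤ (degIn G Q v : ℤ)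

/-- `γ_r = (r²+r−1)/(2r²+2r−1)`. -/
def gammaR (r : ℕ) : ℚ := ((r : ℚ) ^ 2 + r - 1) / (2 * (r : ℚ) ^ 2 + 2 * r - 1)

/-- `X = A₁ ∪ A₂ ∪ B` (of size `2r²+r`) is a `γ_r`-quasi-clique in the gadget graph:
`G[X]` is connected and every vertex of `X` has degree at least
`⌈γ_r·(|X|−1)⌉ = ⌈γ_r·(2r²+r−1)⌉` in `G[X]`. -/
-- aux
def A1set (V : Type*) (r : ℕ) : Set (GadgetV V r) := {x | isA1 x}
def A2set (V : Type*) (r : ℕ) : Set (GadgetV V r) := {x | isA2 x}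
def Bset (V : Type*) (r : ℕ) : Set (GadgetV V r) := {x | isB x}

lemma A1set_eq (V : Type*) (r : ℕ) :
    A1set V r = Set.range (fun i : Fin (r^2) => (Sum.inr (Sum.inl i) : GadgetV V r)) := by
  ext x
  rcases x with v | i | i | i <;>
    simp [A1set, isA1]

lemma A2set_eq (V : Type*) (r : ℕ) :
    A2set V r = Set.range (fun i : Fin (r^2) => (Sum.inr (Sum.inr (Sum.inl i)) : GadgetV V r)) := by
  ext x
  rcases x with v | i | i | i <;>
    simp [A2set, isA2]

lemma Bset_eq (V : Type*) (r : ℕ) :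
    Bset V r = Set.range (fun i : Fin r => (Sum.inr (Sum.inr (Sum.inr i)) : GadgetV V r)) := by
  ext x
  rcases x with v | i | i | i <;>
    simp [Bset, isB]

lemma Xset_eq (V : Type*) (r : ℕ) :
    Xset V r = Set.range (Sum.inr : _ → GadgetV V r) := by
  ext x
  rcases x with v | i | i | i <;>
    simp [Xset, isA1, isA2, isB]

lemma ncard_range {α β : Type*} [Fintype α] (f : α → β) (hf : Function.Injective f) :
    (Set.range f).ncard = Fintype.card α := by
  rw [← Set.image_univ, Set.ncard_image_of_injective _ hf, Set.ncard_univ,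
    Nat.card_eq_fintype_card]

lemma ncard_A1 (V : Type*) (r : ℕ) : (A1set V r).ncard = r ^ 2 := by
  rw [A1set_eq, ncard_range, Fintype.card_fin]
  intro a b h
  simpa using h

lemma ncard_A2 (V : Type*) (r : ℕ) : (A2set V r).ncard = r ^ 2 := by
  rw [A2set_eq, ncard_range, Fintype.card_fin]
  intro a b h
  simpa using h

lemma ncard_B (V : Type*) (r : ℕ) : (Bset V r).ncard = r := by
  rw [Bset_eq, ncard_range, Fintype.card_fin]
  intro a b h
  simpa using h

lemma ncard_X (V : Type*) (r : ℕ) : (Xset V r).ncard = 2 * r ^ 2 + r := by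
  rw [Xset_eq, ncard_range _ Sum.inr_injective]
  simp [Fintype.card_sum]
  ring

lemma Xset_finite (V : Type*) (r : ℕ) : (Xset V r).Finite := by
  rw [Xset_eq]; exact Set.finite_range _

lemma adj_of_isA1 {V : Type*} {r : ℕ} (G' : SimpleGraph V) {a b : GadgetV V r}
    (ha : isA1 a) (hne : a ≠ b) : (gadget G' r).Adj a b := by
  rw [gadget, SimpleGraph.fromRel_adj]
  exact ⟨hne, Or.inl (Or.inl ha)⟩

lemma adj_of_isA2 {V : Type*} {r : ℕ} (G' : SimpleGraph V) {a b : GadgetV V r}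
    (ha : isA2 a) (hb : isA2 b) (hne : a ≠ b) : (gadget G' r).Adj a b := by
  rw [gadget, SimpleGraph.fromRel_adj]
  exact ⟨hne, Or.inl (Or.inr (Or.inr (Or.inl ⟨ha, hb⟩)))⟩

lemma adj_of_isB {V : Type*} {r : ℕ} (G' : SimpleGraph V) {a b : GadgetV V r}
    (ha : isB a) (hb : isB b) (hne : a ≠ b) : (gadget G' r).Adj a b := by
  rw [gadget, SimpleGraph.fromRel_adj]
  exact ⟨hne, Or.inl (Or.inr (Or.inr (Or.inr ⟨ha, hb⟩)))⟩

lemma A1_sub_X (V : Type*) (r : ℕ) : A1set V r ⊆ Xset V r := fun x hx => Or.inl hx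
lemma A2_sub_X (V : Type*) (r : ℕ) : A2set V r ⊆ Xset V r := fun x hx => Or.inr (Or.inl hx)
lemma B_sub_X (V : Type*) (r : ℕ) : Bset V r ⊆ Xset V r := fun x hx => Or.inr (Or.inr hx)

lemma not_A1_A2 {V : Type*} {r : ℕ} {x : GadgetV V r} (h1 : isA1 x) (h2 : isA2 x) : False := by
  rcases x with _ | _ | _ | _ <;> simp_all [isA1, isA2]

lemma not_A1_B {V : Type*} {r : ℕ} {x : GadgetV V r} (h1 : isA1 x) (h2 : isB x) : False := by
  rcases x with _ | _ | _ | _ <;> simp_all [isA1, isB]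

lemma not_A2_B {V : Type*} {r : ℕ} {x : GadgetV V r} (h1 : isA2 x) (h2 : isB x) : False := by
  rcases x with _ | _ | _ | _ <;> simp_all [isA2, isB]

lemma degIn_lower {V : Type*} {r : ℕ} (G' : SimpleGraph V) (hr : 0 < r)
    {v : GadgetV V r} (hv : v ∈ Xset V r) :
    r ^ 2 + r ≤ degIn (gadget G' r) (Xset V r) v + 1 := by
  have hfin : (Xset V r ∩ (gadget G' r).neighborSet v).Finite :=
    (Xset_finite V r).subset Set.inter_subset_left
  have hdeg : degIn (gadget G' r) (Xset V r) v
      = (Xset V r ∩ (gadget G' r).neighborSet v).ncard := rfl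
  have hrr : r ≤ r ^ 2 := Nat.le_self_pow two_ne_zero r
  rcases hv with hv | hv | hv
  · -- v ∈ A1 : A2 ∪ B ⊆ neighbors
    have hsub : A2set V r ∪ Bset V r ⊆ Xset V r ∩ (gadget G' r).neighborSet v := by
      rintro x (hx | hx)
      · exact ⟨A2_sub_X V r hx, adj_of_isA1 G' hv (fun h => not_A1_A2 hv (h ▸ hx))⟩
      · exact ⟨B_sub_X V r hx, adj_of_isA1 G' hv (fun h => not_A1_B hv (h ▸ hx))⟩
    have hdisj : Disjoint (A2set V r) (Bset V r) := by
      rw [Set.disjoint_left]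
      intro x hx hx'; exact not_A2_B hx hx'
    have hcard : (A2set V r ∪ Bset V r).ncard = r ^ 2 + r := by
      rw [Set.ncard_union_eq hdisj ((Xset_finite V r).subset (A2_sub_X V r))
        ((Xset_finite V r).subset (B_sub_X V r)), ncard_A2, ncard_B]
    have := Set.ncard_le_ncard hsub hfin
    omega
  · -- v ∈ A2 : A1 ∪ (A2 \ {v}) ⊆ neighbors
    have hvmem : v ∈ A2set V r := hv
    have hsub : A1set V r ∪ (A2set V r \ {v}) ⊆ Xset V r ∩ (gadget G' r).neighborSet v := by
      rintro x (hx | ⟨hx, hxv⟩)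
      · exact ⟨A1_sub_X V r hx,
          ((adj_of_isA1 G' hx (fun h => not_A1_A2 hx (h ▸ hv))).symm : (gadget G' r).Adj v x)⟩
      · exact ⟨A2_sub_X V r hx,
          (adj_of_isA2 G' hv hx (fun h => hxv (Set.mem_singleton_iff.mpr h.symm))
            : (gadget G' r).Adj v x)⟩
    have hdisj : Disjoint (A1set V r) (A2set V r \ {v}) := by
      rw [Set.disjoint_left]
      intro x hx hx'; exact not_A1_A2 hx hx'.1
    have hcard : (A1set V r ∪ (A2set V r \ {v})).ncard = r ^ 2 + (r ^ 2 - 1) := by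
      rw [Set.ncard_union_eq hdisj ((Xset_finite V r).subset (A1_sub_X V r))
        (((Xset_finite V r).subset (A2_sub_X V r)).subset Set.diff_subset),
        Set.ncard_diff_singleton_of_mem hvmem,
        ncard_A1, ncard_A2]
    have := Set.ncard_le_ncard hsub hfin
    omega
  · -- v ∈ B : A1 ∪ (B \ {v}) ⊆ neighbors
    have hvmem : v ∈ Bset V r := hv
    have hsub : A1set V r ∪ (Bset V r \ {v}) ⊆ Xset V r ∩ (gadget G' r).neighborSet v := by
      rintro x (hx | ⟨hx, hxv⟩)
      · exact ⟨A1_sub_X V r hx,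
          ((adj_of_isA1 G' hx (fun h => not_A1_B hx (h ▸ hv))).symm : (gadget G' r).Adj v x)⟩
      · exact ⟨B_sub_X V r hx,
          (adj_of_isB G' hv hx (fun h => hxv (Set.mem_singleton_iff.mpr h.symm))
            : (gadget G' r).Adj v x)⟩
    have hdisj : Disjoint (A1set V r) (Bset V r \ {v}) := by
      rw [Set.disjoint_left]
      intro x hx hx'; exact not_A1_B hx hx'.1
    have hcard : (A1set V r ∪ (Bset V r \ {v})).ncard = r ^ 2 + (r - 1) := by
      rw [Set.ncard_union_eq hdisj ((Xset_finite V r).subset (A1_sub_X V r))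
        (((Xset_finite V r).subset (B_sub_X V r)).subset Set.diff_subset),
        Set.ncard_diff_singleton_of_mem hvmem,
        ncard_A1, ncard_B]
    have := Set.ncard_le_ncard hsub hfin
    omega

lemma ceil_bound (r : ℕ) (hr : 0 < r) :
    ⌈gammaR r * (((2 * r ^ 2 + r : ℕ) : ℚ) - 1)⌉ ≤ (r : ℤ) ^ 2 + r - 1 := by
  rw [Int.ceil_le]
  push_cast
  have hR : (1 : ℚ) ≤ (r : ℚ) := by exact_mod_cast hr
  rw [gammaR, div_mul_eq_mul_div, div_le_iff₀ (by nlinarith)]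
  nlinarith

lemma gadget_connected {V : Type*} (G' : SimpleGraph V) {r : ℕ} (hr : 0 < r) :
    ((gadget G' r).induce (Xset V r)).Connected := by
  have hpos : 0 < r ^ 2 := pow_pos hr 2
  set a0 : GadgetV V r := Sum.inr (Sum.inl ⟨0, hpos⟩) with ha0def
  have ha0 : a0 ∈ Xset V r := Or.inl trivial
  have ha0A1 : isA1 a0 := trivial
  have reach : ∀ z : (Xset V r),
      ((gadget G' r).induce (Xset V r)).Reachable ⟨a0, ha0⟩ z := by
    intro z
    by_cases h : (z : GadgetV V r) = a0
    · have : z = ⟨a0, ha0⟩ := Subtype.ext h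
      rw [this]
    · have hadj : ((gadget G' r).induce (Xset V r)).Adj ⟨a0, ha0⟩ z :=
        (adj_of_isA1 G' ha0A1 (Ne.symm h) : (gadget G' r).Adj a0 z.1)
      exact hadj.reachable
  haveI : Nonempty (Xset V r) := ⟨⟨a0, ha0⟩⟩
  exact ⟨fun x y => (reach x).symm.trans (reach y)⟩


theorem stmt_4 {V : Type*} [Fintype V] (G' : SimpleGraph V) (r : ℕ) (hr : 0 < r) :
    (Xset V r).ncard = 2 * r ^ 2 + r ∧
      IsQuasiClique (gadget G' r) (gammaR r) (Xset V r) := by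
  refine ⟨ncard_X V r, gadget_connected G' hr, ?_⟩
  intro v hv
  rw [ncard_X]
  have h1 := degIn_lower G' hr hv
  have h1' : ((r : ℤ) ^ 2 + r) ≤ (degIn (gadget G' r) (Xset V r) v : ℤ) + 1 := by
    exact_mod_cast h1
  have h2 := ceil_bound r hr
  linarith [h2, h1']
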